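/- Let F be a field with a primitive n-th root of unity ω, let 1 ≤ r ≤ n, and let A be the r×n matrix with (a,c) entry ω^(a·c). Let v = (1,0,...,0)ᵀ and w = (0,...,0,1)ᵀ be r×1 columns, and let B = (v | w | A) be the r×(n+2) matrix. Then every r×r submatrix of B (formed by choosing r distinct columns of B) has nonzero determinant; hence B generates an MDS [n+2, r] code. -/

import Mathlib

theorem stmt7 {F : Type*} [Field F] {n r : ℕ} {ω : F} (hω : IsPrimitiveRoot ω n)
    (hr1 : 1 ≤ r) (hrn : r ≤ n) :
    ∀ c : Fin r → (Fin 2 ⊕ Fin n), Function.Injective c →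
      Matrix.det
        ((Matrix.fromCols
            (Matrix.of fun (a : Fin r) (j : Fin 2) =>
              if j = 0 then (if (a : ℕ) = 0 then (1 : F) else 0)
              else (if (a : ℕ) = r - 1 then 1 else 0))
            (Matrix.of fun (a : Fin r) (j : Fin n) => ω ^ ((a : ℕ) * (j : ℕ)))).submatrix
          id c) ≠ 0 := by
  classical
  intro c hc hdet
  have hn : n ≠ 0 := by omega
  have hωne : ω ≠ 0 := hω.ne_zero hn
  obtain ⟨x, hx0, hxM⟩ := Matrix.exists_vecMul_eq_zero_iff.mpr hdet
  set p : Polynomial F := ∑ a : Fin r, Polynomial.C (x a) * Polynomial.X ^ (a : ℕ) with hpdef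
  have hpc : ∀ k : ℕ, p.coeff k = ∑ a : Fin r, if (a : ℕ) = k then x a else 0 := by
    intro k
    rw [hpdef, Polynomial.finset_sum_coeff]
    simp [Polynomial.coeff_X_pow, mul_ite, eq_comm]
  have hcoeff : ∀ a : Fin r, p.coeff (a : ℕ) = x a := by
    intro a
    rw [hpc, Finset.sum_eq_single a]
    · simp
    · intro b _ hb
      exact if_neg fun h => hb (Fin.ext h)
    · simp
  have hcoeff_big : ∀ k : ℕ, r ≤ k → p.coeff k = 0 := by
    intro k hk
    rw [hpc]
    refine Finset.sum_eq_zero fun a _ => if_neg ?_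
    have := a.isLt
    omega
  have hpne : p ≠ 0 := by
    intro h
    apply hx0
    funext a
    have := hcoeff a
    rw [h] at this
    simpa using this.symm
  have heval : ∀ t : F, p.eval t = ∑ a : Fin r, x a * t ^ (a : ℕ) := by
    intro t
    rw [hpdef, Polynomial.eval_finset_sum]
    simp
  have hcol : ∀ j : Fin r, ∑ a : Fin r, x a *
      (Matrix.fromCols
        (Matrix.of fun (a : Fin r) (j : Fin 2) =>
          if j = 0 then (if (a : ℕ) = 0 then (1 : F) else 0)
          else (if (a : ℕ) = r - 1 then 1 else 0))
        (Matrix.of fun (a : Fin r) (j : Fin n) => ω ^ ((a : ℕ) * (j : ℕ)))) a (c j) = 0 := by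
    intro j
    have := congrFun hxM j
    simpa [Matrix.vecMul, dotProduct] using this
  -- roots from Fourier columns
  have hroot : ∀ j : Fin r, ∀ k : Fin n, c j = Sum.inr k → p.eval (ω ^ (k : ℕ)) = 0 := by
    intro j k hjk
    have h := hcol j
    rw [hjk] at h
    rw [heval, ← h]
    refine Finset.sum_congr rfl fun a _ => ?_
    rw [Matrix.fromCols_apply_inr, Matrix.of_apply, ← pow_mul, mul_comm (k : ℕ) (a : ℕ)]
  -- column v gives x 0 = 0
  have hv0 : ∀ j : Fin r, c j = Sum.inl 0 → x ⟨0, hr1⟩ = 0 := by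
    intro j hj
    have h := hcol j
    rw [hj] at h
    rw [← h, Finset.sum_eq_single (⟨0, hr1⟩ : Fin r)]
    · simp [Matrix.fromCols_apply_inl]
    · intro b _ hb
      have hb' : (b : ℕ) ≠ 0 := fun h => hb (Fin.ext h)
      simp [Matrix.fromCols_apply_inl, hb']
    · simp
  -- column w gives x (r-1) = 0
  have hw0 : ∀ j : Fin r, c j = Sum.inl 1 → x ⟨r - 1, by omega⟩ = 0 := by
    intro j hj
    have h := hcol j
    rw [hj] at h
    rw [← h, Finset.sum_eq_single (⟨r - 1, by omega⟩ : Fin r)]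
    · simp [Matrix.fromCols_apply_inl]
    · intro b _ hb
      have hb' : (b : ℕ) ≠ r - 1 := fun h => hb (Fin.ext h)
      simp [Matrix.fromCols_apply_inl, hb']
    · simp
  set g : Fin 2 ⊕ Fin n → F := Sum.elim (fun _ => (0 : F)) (fun k => ω ^ (k : ℕ)) with hgdef
  have hg : ∀ s t : Fin 2 ⊕ Fin n, s ≠ Sum.inl 1 → t ≠ Sum.inl 1 → g s = g t → s = t := by
    rintro (i | k) (i' | k') hs ht hgst
    · have hi : (i : ℕ) ≠ 1 := fun h => hs (congrArg Sum.inl (Fin.ext (by simpa using h)))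
      have hi' : (i' : ℕ) ≠ 1 := fun h => ht (congrArg Sum.inl (Fin.ext (by simpa using h)))
      have := i.isLt; have := i'.isLt
      exact congrArg Sum.inl (Fin.ext (by omega))
    · simp only [hgdef, Sum.elim_inl, Sum.elim_inr] at hgst
      exact absurd hgst.symm (pow_ne_zero _ hωne)
    · simp only [hgdef, Sum.elim_inl, Sum.elim_inr] at hgst
      exact absurd hgst (pow_ne_zero _ hωne)
    · simp only [hgdef, Sum.elim_inr] at hgst
      exact congrArg Sum.inr (Fin.ext (hω.pow_inj k.isLt k'.isLt hgst))
  have hevalg : ∀ j : Fin r, c j ≠ Sum.inl 1 → p.eval (g (c j)) = 0 := by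
    intro j hj
    rcases hcj : c j with i | k
    · have hi : i = 0 := by
        have : (i : ℕ) ≠ 1 := fun h => hj (hcj.trans (congrArg Sum.inl (Fin.ext (by simpa using h))))
        have := i.isLt
        exact Fin.ext (by omega)
      subst hi
      have h0 : x ⟨0, hr1⟩ = 0 := hv0 j hcj
      have : p.eval 0 = 0 := by
        rw [← Polynomial.coeff_zero_eq_eval_zero]
        have := hcoeff ⟨0, hr1⟩
        simpa [h0] using this
      simpa [hgdef] using this
    · simpa [hgdef] using hroot j k hcj
  by_cases hB : ∃ j1, c j1 = Sum.inl 1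
  · obtain ⟨j1, hj1⟩ := hB
    have hxr : x ⟨r - 1, by omega⟩ = 0 := hw0 j1 hj1
    have hdeg : p.degree < ((r - 1 : ℕ) : WithBot ℕ) := by
      rw [Polynomial.degree_lt_iff_coeff_zero]
      intro m hm
      rcases eq_or_lt_of_le hm with h | h
      · have := hcoeff ⟨r - 1, by omega⟩
        simp only [hxr] at this
        rwa [← h]
      · exact hcoeff_big m (by omega)
    have hndeg : p.natDegree < r - 1 := by
      rwa [Polynomial.natDegree_lt_iff_degree_lt hpne]
    have hcard : Fintype.card {j : Fin r // j ≠ j1} = r - 1 := by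
      rw [Fintype.card_subtype_compl, Fintype.card_subtype_eq, Fintype.card_fin]
    refine hpne (Polynomial.eq_zero_of_natDegree_lt_card_of_eval_eq_zero p
      (f := fun j : {j : Fin r // j ≠ j1} => g (c j.1)) ?_ ?_ ?_)
    · intro a b hab
      have ha : c a.1 ≠ Sum.inl 1 := fun h => a.2 (hc (h.trans hj1.symm))
      have hb : c b.1 ≠ Sum.inl 1 := fun h => b.2 (hc (h.trans hj1.symm))
      exact Subtype.ext (hc (hg _ _ ha hb hab))
    · intro j
      exact hevalg j.1 (fun h => j.2 (hc (h.trans hj1.symm)))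
    · rwa [hcard]
  · push_neg at hB
    have hdeg : p.degree < ((r : ℕ) : WithBot ℕ) := by
      rw [Polynomial.degree_lt_iff_coeff_zero]
      intro m hm
      exact hcoeff_big m hm
    have hndeg : p.natDegree < r := by
      rwa [Polynomial.natDegree_lt_iff_degree_lt hpne]
    refine hpne (Polynomial.eq_zero_of_natDegree_lt_card_of_eval_eq_zero p
      (f := fun j : Fin r => g (c j)) ?_ ?_ ?_)
    · intro a b hab
      exact hc (hg _ _ (hB a) (hB b) hab)
    · intro j
      exact hevalg j (hB j)
    · rwa [Fintype.card_fin]
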